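/- Post-detection confidence set for the pre-change parameter: let C be any random subset of {1,…,τ}, measurable with respect to the data and auxiliary randomness, such that P_{θ₀,T,θ₁}(T ∈ C | τ ≥ T) ≥ 1 − α for all θ₀ ∈ Θ₀, θ₁ ∈ Θ₁, and T ∈ ℕ with P_{θ₀,∞}(τ ≥ T) > 0, where τ satisfies Assumption 1. Then for every η₀ ∈ (0,1) and every T ∈ ℕ, P_{θ₀,T,θ₁}( θ₀ ∈ ⋃_{t∈C} CI(X₁,…,X_{t−1}; 1 − η₀ r_t*) | τ ≥ T ) ≥ 1 − α − η₀. -/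

import Mathlib

open MeasureTheory ProbabilityTheory Filter Set
open scoped ENNReal NNReal

namespace SeqChange

variable {𝒳 : Type*} [MeasurableSpace 𝒳]

/-- The σ-algebra on the sequence space generated by the coordinates with indices in `s`. -/
def coordSigma (𝒳 : Type*) [MeasurableSpace 𝒳] (s : Set ℕ) : MeasurableSpace (ℕ → 𝒳) :=
  ⨆ i ∈ s, MeasurableSpace.comap (fun ω : ℕ → 𝒳 => ω i) inferInstance

/-- The natural filtration `σ(X₁, …, Xₙ)` of the observation sequence (observations are
indexed from 1; coordinate 0 is unused). -/
def natFilt (𝒳 : Type*) [MeasurableSpace 𝒳] (n : ℕ) : MeasurableSpace (ℕ → 𝒳) :=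
  coordSigma 𝒳 {i | 1 ≤ i ∧ i ≤ n}

/-- `τ` is a stopping time with respect to the natural filtration of the observation
sequence, taking values in `ℕ ∪ {∞}`. -/
def IsStoppingTimeSeq (τ : (ℕ → 𝒳) → ℕ∞) : Prop :=
  ∀ n : ℕ, MeasurableSet[natFilt 𝒳 n] {ω | τ ω ≤ (n : ℕ∞)}

/-- `P` is the joint law of a sequence of independent observations `X₁, X₂, …` with
`Xₙ ~ ν n` for every `n ≥ 1`: a probability measure whose finite-dimensional
distributions on the coordinates with indices `≥ 1` are the corresponding products. -/
def IsProductLaw (P : Measure (ℕ → 𝒳)) (ν : ℕ → Measure 𝒳) : Prop :=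
  IsProbabilityMeasure P ∧
    ∀ s : Finset ℕ, (∀ i ∈ s, 1 ≤ i) → ∀ A : ℕ → Set 𝒳, (∀ i, MeasurableSet (A i)) →
      P {ω | ∀ i ∈ s, ω i ∈ A i} = ∏ i ∈ s, ν i (A i)

/-- `P` is the law `P_{F₀,T,F₁}`: independent coordinates, `Xₙ ~ F₀` for `n < T` and
`Xₙ ~ F₁` for `n ≥ T`. -/
def IsChangeLaw (P : Measure (ℕ → 𝒳)) (F₀ F₁ : Measure 𝒳) (T : ℕ) : Prop :=
  IsProductLaw P (fun n => if n < T then F₀ else F₁)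

/-- `P` is the law `P_{F₀,∞}`: all coordinates i.i.d. `F₀` (no change ever occurs). -/
def IsNoChangeLaw (P : Measure (ℕ → 𝒳)) (F₀ : Measure 𝒳) : Prop :=
  IsProductLaw P (fun _ => F₀)

/-- Under `Q`, the coordinates with indices in `I` are i.i.d. with law `ν`. -/
def IsIIDOn (Q : Measure (ℕ → 𝒳)) (ν : Measure 𝒳) (I : Set ℕ) : Prop :=
  IsProbabilityMeasure Q ∧
    ∀ s : Finset ℕ, (↑s ⊆ I) → ∀ A : ℕ → Set 𝒳, (∀ i, MeasurableSet (A i)) →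
      Q {ω | ∀ i ∈ s, ω i ∈ A i} = ∏ i ∈ s, ν (A i)

/-- Forward filtration `σ(X_t, …, X_n)`. -/
def fwdFilt (𝒳 : Type*) [MeasurableSpace 𝒳] (t n : ℕ) : MeasurableSpace (ℕ → 𝒳) :=
  coordSigma 𝒳 {i | t ≤ i ∧ i ≤ n}

/-- Backward filtration `σ(X_n, …, X_{t-1})`. -/
def bwdFilt (𝒳 : Type*) [MeasurableSpace 𝒳] (t n : ℕ) : MeasurableSpace (ℕ → 𝒳) :=
  coordSigma 𝒳 {i | n ≤ i ∧ i < t}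

/-- A forward `t`-delay e-process under the class `𝒫₁`: a nonnegative process
`(R n)_{n ≥ t}` adapted to the forward filtration `σ(X_t, …, X_n)` such that for every
`F₁ ∈ 𝒫₁`, every law `Q` under which `X_t, X_{t+1}, …` are i.i.d. `F₁`, and every
stopping time `κ ≥ t` of the forward filtration, `E_Q[R_κ] ≤ 1`. -/
def IsForwardEProcess (𝒫₁ : Set (Measure 𝒳)) (t : ℕ) (R : ℕ → (ℕ → 𝒳) → ℝ≥0∞) : Prop :=
  (∀ n, t ≤ n → Measurable[fwdFilt 𝒳 t n] (R n)) ∧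
    ∀ F₁ ∈ 𝒫₁, ∀ Q : Measure (ℕ → 𝒳), IsIIDOn Q F₁ {i | t ≤ i} →
      ∀ κ : (ℕ → 𝒳) → ℕ, (∀ ω, t ≤ κ ω) →
        (∀ n, MeasurableSet[fwdFilt 𝒳 t n] {ω | κ ω ≤ n}) →
        ∫⁻ ω, R (κ ω) ω ∂Q ≤ 1

/-- A backward `t`-delay e-process under the class `𝒫₀`: a nonnegative process
`(S n)_{1 ≤ n < t}` adapted to the backward filtration `σ(X_n, …, X_{t-1})` such that for
every `F₀ ∈ 𝒫₀`, every law `Q` under which `X₁, …, X_{t-1}` are i.i.d. `F₀`, and every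
stopping time `κ` of the backward filtration with `1 ≤ κ < t`, `E_Q[S_κ] ≤ 1`. -/
def IsBackwardEProcess (𝒫₀ : Set (Measure 𝒳)) (t : ℕ) (S : ℕ → (ℕ → 𝒳) → ℝ≥0∞) : Prop :=
  (∀ n, 1 ≤ n → n < t → Measurable[bwdFilt 𝒳 t n] (S n)) ∧
    ∀ F₀ ∈ 𝒫₀, ∀ Q : Measure (ℕ → 𝒳), IsIIDOn Q F₀ {i | 1 ≤ i ∧ i < t} →
      ∀ κ : (ℕ → 𝒳) → ℕ, (∀ ω, 1 ≤ κ ω ∧ κ ω < t) →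
        (∀ n, MeasurableSet[bwdFilt 𝒳 t n] {ω | n ≤ κ ω}) →
        ∫⁻ ω, S (κ ω) ω ∂Q ≤ 1

/-- The localization statistic `M_t` built from the estimator `T̂`, forward e-processes `R`
and backward e-processes `S`: `M_t = R^{(t)}_{T̂ - 1}` if `t < T̂ ≤ τ < ∞`, `M_t = 1` if
`t = T̂ ≤ τ < ∞`, `M_t = S^{(t)}_{T̂}` if `T̂ < t ≤ τ < ∞`, and `M_t = -∞` if `t > τ` or
`τ = ∞`. -/
noncomputable def eStat (τ : (ℕ → 𝒳) → ℕ∞) (That : (ℕ → 𝒳) → ℕ)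
    (R S : ℕ → ℕ → (ℕ → 𝒳) → ℝ≥0∞) (t : ℕ) (ω : ℕ → 𝒳) : EReal :=
  if (t : ℕ∞) ≤ τ ω ∧ τ ω ≠ ⊤ then
    if t < That ω then ((R t (That ω - 1) ω : ℝ≥0∞) : EReal)
    else if t = That ω then 1
    else ((S t (That ω) ω : ℝ≥0∞) : EReal)
  else ⊥

/-- `Quantile(1 − c; v)`: the `⌈(1 − c)·|v|⌉`-th smallest of the values in `v`. -/
noncomputable def quantileStat (c : ℝ) (v : Multiset EReal) : EReal :=
  (v.sort (· ≤ ·)).getD (⌈(1 - c) * (v.card : ℝ)⌉₊ - 1) ⊥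

/-- Membership in the stopped confidence sequence `CS(X_t, …, X_τ; 1 − c)`:
`θ ∈ CS(X_t,…,X_n; 1−c)` whenever `τ = n` (vacuously true when `τ = ∞`). -/
def stoppedCSMem {𝒳 : Type*} [MeasurableSpace 𝒳] {Θ : Type*} (τ : (ℕ → 𝒳) → ℕ∞)
    (CSset : ℝ → ℕ → ℕ → (ℕ → 𝒳) → Set Θ) (c : ℝ) (t : ℕ) (ω : ℕ → 𝒳) (θ : Θ) : Prop :=
  ∀ n : ℕ, t ≤ n → τ ω = (n : ℕ∞) → θ ∈ CSset c t n ω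


section Aux

variable {𝒳 : Type*} [MeasurableSpace 𝒳]

lemma coordSigma_le (s : Set ℕ) :
    coordSigma 𝒳 s ≤ (inferInstance : MeasurableSpace (ℕ → 𝒳)) :=
  iSup₂_le fun i _ => (measurable_pi_apply i).comap_le

/-- cylinder sets over index set `s` -/
def cylSets (𝒳 : Type*) [MeasurableSpace 𝒳] (s : Set ℕ) : Set (Set (ℕ → 𝒳)) :=
  {B | ∃ t : Finset ℕ, ∃ A : ℕ → Set 𝒳, ↑t ⊆ s ∧ (∀ i, MeasurableSet (A i)) ∧
    B = {ω : ℕ → 𝒳 | ∀ i ∈ t, ω i ∈ A i}}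

lemma isPiSystem_cylSets (s : Set ℕ) : IsPiSystem (cylSets 𝒳 s) := by
  rintro B₁ ⟨t₁, A₁, ht₁, hA₁, rfl⟩ B₂ ⟨t₂, A₂, ht₂, hA₂, rfl⟩ -
  refine ⟨t₁ ∪ t₂,
    fun i => (if i ∈ t₁ then A₁ i else Set.univ) ∩ (if i ∈ t₂ then A₂ i else Set.univ),
    ?_, ?_, ?_⟩
  · rw [Finset.coe_union]; exact Set.union_subset ht₁ ht₂
  · intro i
    refine MeasurableSet.inter ?_ ?_ <;> split <;>
      first | exact hA₁ i | exact hA₂ i | exact MeasurableSet.univ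
  · ext ω
    simp only [Set.mem_inter_iff, Set.mem_setOf_eq, Finset.mem_union]
    constructor
    · rintro ⟨h1, h2⟩ i hi
      constructor
      · by_cases h : i ∈ t₁ <;> simp [h, h1 i]
      · by_cases h : i ∈ t₂ <;> simp [h, h2 i]
    · intro h
      constructor
      · intro i hi
        have := (h i (Or.inl hi)).1
        simpa [hi] using this
      · intro i hi
        have := (h i (Or.inr hi)).2
        simpa [hi] using this

lemma coordSigma_eq_generateFrom (s : Set ℕ) :
    coordSigma 𝒳 s = MeasurableSpace.generateFrom (cylSets 𝒳 s) := by
  refine le_antisymm (iSup₂_le fun i hi => ?_) (MeasurableSpace.generateFrom_le ?_)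
  · intro B hB
    obtain ⟨A, hA, rfl⟩ := hB
    apply MeasurableSpace.measurableSet_generateFrom
    refine ⟨{i}, fun _ => A, by simpa using hi, fun _ => hA, ?_⟩
    ext ω; simp
  · rintro B ⟨t, A, hts, hA, rfl⟩
    have hset : {ω : ℕ → 𝒳 | ∀ i ∈ t, ω i ∈ A i}
        = ⋂ i ∈ t, (fun ω : ℕ → 𝒳 => ω i) ⁻¹' A i := by
      ext ω; simp
    rw [hset]
    refine MeasurableSet.biInter t.countable_toSet fun i hi => ?_
    exact (le_iSup₂ (f := fun (i : ℕ) (_ : i ∈ s) =>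
      MeasurableSpace.comap (fun ω : ℕ → 𝒳 => ω i) inferInstance) i (hts hi)) _ ⟨A i, hA i, rfl⟩

/-- Two product laws whose coordinate marginals agree for `1 ≤ i ≤ n` agree on
`natFilt n`-measurable sets. -/
lemma measure_eq_on_natFilt (n : ℕ) (P Q : Measure (ℕ → 𝒳)) (ν₁ ν₂ : ℕ → Measure 𝒳)
    (hP : IsProductLaw P ν₁) (hQ : IsProductLaw Q ν₂)
    (hν : ∀ i, 1 ≤ i → i ≤ n → ν₁ i = ν₂ i)
    {B : Set (ℕ → 𝒳)} (hB : MeasurableSet[natFilt 𝒳 n] B) : P B = Q B := by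
  haveI hPp : IsProbabilityMeasure P := hP.1
  haveI hQp : IsProbabilityMeasure Q := hQ.1
  refine MeasurableSpace.induction_on_inter (C := fun B _ => P B = Q B)
    (s := cylSets 𝒳 {i | 1 ≤ i ∧ i ≤ n}) (m := natFilt 𝒳 n)
    (coordSigma_eq_generateFrom _) (isPiSystem_cylSets _) (by simp) ?_ ?_ ?_ B hB
  · rintro B ⟨t, A, hts, hA, rfl⟩
    rw [hP.2 t (fun i hi => (hts hi).1) A hA, hQ.2 t (fun i hi => (hts hi).1) A hA]
    exact Finset.prod_congr rfl fun i hi => by rw [hν i (hts hi).1 (hts hi).2]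
  · intro t ht h
    have ht' : MeasurableSet t := coordSigma_le _ _ ht
    rw [prob_compl_eq_one_sub ht', prob_compl_eq_one_sub ht', h]
  · intro f hdisj hmeas hind
    rw [measure_iUnion hdisj fun i => coordSigma_le _ _ (hmeas i),
      measure_iUnion hdisj fun i => coordSigma_le _ _ (hmeas i)]
    exact tsum_congr hind

end Aux

/-- Post-detection confidence set for the pre-change parameter: if `C`
is any random subset of `{1,…,τ}` with conditional coverage
`P_{θ₀,T,θ₁}(T ∈ C | τ ≥ T) ≥ 1 − α` (for all `θ₀ ∈ Θ₀`, `θ₁ ∈ Θ₁`, `T` with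
`P_{θ₀,∞}(τ ≥ T) > 0`), where `τ` satisfies Assumption 1, then for every `η₀ ∈ (0,1)`
and every `T`,
`P_{θ₀,T,θ₁}(θ₀ ∈ ⋃_{t∈C} CI(X₁,…,X_{t−1}; 1 − η₀ r_t*) | τ ≥ T) ≥ 1 − α − η₀`. -/
theorem prechange_parameter_confidence
    {𝒳 : Type*} [MeasurableSpace 𝒳] {Θ : Type*}
    (Θ₀ Θ₁ : Set Θ) (hdisj : Disjoint Θ₀ Θ₁) (F : Θ → Measure 𝒳)
    (τ : (ℕ → 𝒳) → ℕ∞) (hτ : IsStoppingTimeSeq τ)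
    -- Assumption 1: least favorable pre-change parameter θ₀*
    (θ₀s : Θ) (hθ₀s : θ₀s ∈ Θ₀)
    (Pinfs : Measure (ℕ → 𝒳)) (hPinfs : IsNoChangeLaw Pinfs (F θ₀s))
    (hass1 : ∀ θ ∈ Θ₀, ∀ t : ℕ, ∀ Pinf' : Measure (ℕ → 𝒳), IsNoChangeLaw Pinf' (F θ) →
      Pinfs {ω | (t : ℕ∞) ≤ τ ω} ≤ Pinf' {ω | (t : ℕ∞) ≤ τ ω})
    -- the auxiliary randomization carrying the estimators `r_t*`
    {Ωr : Type*} [MeasurableSpace Ωr] (μr : Measure Ωr) [IsProbabilityMeasure μr]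
    (r : ℕ → Ωr → ℝ) (hrmeas : ∀ t, Measurable (r t))
    (hrpos : ∀ t, ∀ᵐ a ∂μr, 0 < r t a) (hrint : ∀ t, Integrable (r t) μr)
    (hrunb : ∀ t : ℕ, ∫ a, r t a ∂μr = (Pinfs {ω | (t : ℕ∞) ≤ τ ω}).toReal)
    (α : ℝ) (hα : α ∈ Set.Ioo (0 : ℝ) 1)
    -- the confidence set `C ⊆ {1,…,τ}` for the changepoint
    (C : (ℕ → 𝒳) × Ωr → Set ℕ)
    (hCmeas : ∀ t : ℕ, MeasurableSet {q : (ℕ → 𝒳) × Ωr | t ∈ C q})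
    (hCsub : ∀ q, ∀ t ∈ C q, 1 ≤ t ∧ (t : ℕ∞) ≤ τ q.1)
    (hCcov : ∀ θ₀ ∈ Θ₀, ∀ θ₁ ∈ Θ₁, ∀ T : ℕ, 1 ≤ T →
      ∀ P Pinf₀ : Measure (ℕ → 𝒳), IsChangeLaw P (F θ₀) (F θ₁) T →
        IsNoChangeLaw Pinf₀ (F θ₀) → Pinf₀ {ω | (T : ℕ∞) ≤ τ ω} ≠ 0 →
        ENNReal.ofReal (1 - α) ≤
          ProbabilityTheory.cond (P.prod μr) {q | (T : ℕ∞) ≤ τ q.1} {q | T ∈ C q})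
    -- the confidence interval procedure for the pre-change parameter
    (CIset : ℝ → ℕ → (ℕ → 𝒳) → Set Θ)
    (hCImeas : ∀ (t : ℕ) (θ : Θ), MeasurableSet {q : (ℕ → 𝒳) × ℝ | θ ∈ CIset q.2 t q.1})
    (hCI : ∀ c : ℝ, c ∈ Set.Ioo (0 : ℝ) 1 → ∀ t : ℕ, 1 ≤ t → ∀ θ₀ ∈ Θ₀, ∀ θ₁ ∈ Θ₁,
      ∀ P : Measure (ℕ → 𝒳), IsChangeLaw P (F θ₀) (F θ₁) t →
        ENNReal.ofReal (1 - c) ≤ P {ω | θ₀ ∈ CIset c t ω})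
    (η₀ : ℝ) (hη₀ : η₀ ∈ Set.Ioo (0 : ℝ) 1)
    (θ₀ : Θ) (hθ₀ : θ₀ ∈ Θ₀) (θ₁ : Θ) (hθ₁ : θ₁ ∈ Θ₁)
    (T : ℕ) (hT : 1 ≤ T)
    (P Pinf₀ : Measure (ℕ → 𝒳)) (hP : IsChangeLaw P (F θ₀) (F θ₁) T)
    (hPinf₀ : IsNoChangeLaw Pinf₀ (F θ₀))
    (hpos : Pinf₀ {ω | (T : ℕ∞) ≤ τ ω} ≠ 0) :
    ENNReal.ofReal (1 - α - η₀) ≤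
      ProbabilityTheory.cond (P.prod μr) {q : (ℕ → 𝒳) × Ωr | (T : ℕ∞) ≤ τ q.1}
        {q : (ℕ → 𝒳) × Ωr | θ₀ ∈ ⋃ t ∈ C q, CIset (η₀ * r t q.2) t q.1} := by
  haveI hPprob : IsProbabilityMeasure P := hP.1
  haveI hPinf₀prob : IsProbabilityMeasure Pinf₀ := hPinf₀.1
  haveI hPinfsprob : IsProbabilityMeasure Pinfs := hPinfs.1
  -- trivial case: the asserted level is nonpositive
  rcases le_or_gt (1 - α - η₀) 0 with hX0 | hX0
  · rw [ENNReal.ofReal_eq_zero.mpr hX0]; exact zero_le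
  -- the event `{τ ≥ T}` is measurable w.r.t. `σ(X₁,…,X_{T-1})`
  have hENat : ∀ x : ℕ∞, ((T : ℕ∞) ≤ x ↔ ¬ x ≤ ((T - 1 : ℕ) : ℕ∞)) := by
    intro x
    induction x using ENat.recTopCoe with
    | top => simp
    | coe m => exact_mod_cast (by omega : T ≤ m ↔ ¬ (m ≤ T - 1))
  have hEτeq : {ω : ℕ → 𝒳 | (T : ℕ∞) ≤ τ ω} = {ω | τ ω ≤ ((T - 1 : ℕ) : ℕ∞)}ᶜ := by
    ext ω
    simp only [Set.mem_setOf_eq, Set.mem_compl_iff]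
    exact hENat (τ ω)
  have hEτm' : MeasurableSet[natFilt 𝒳 (T - 1)] {ω : ℕ → 𝒳 | (T : ℕ∞) ≤ τ ω} := by
    rw [hEτeq]; exact (hτ (T - 1)).compl
  have hEτmeas : MeasurableSet {ω : ℕ → 𝒳 | (T : ℕ∞) ≤ τ ω} := coordSigma_le _ _ hEτm'
  -- under `P` and `Pinf₀` the event `{τ ≥ T}` has the same probability
  have hkey : P {ω : ℕ → 𝒳 | (T : ℕ∞) ≤ τ ω} = Pinf₀ {ω : ℕ → 𝒳 | (T : ℕ∞) ≤ τ ω} :=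
    measure_eq_on_natFilt (T - 1) P Pinf₀ _ _ hP hPinf₀
      (fun i h1 h2 => if_pos (by omega)) hEτm'
  have hp0 : P {ω : ℕ → 𝒳 | (T : ℕ∞) ≤ τ ω} ≠ 0 := by rw [hkey]; exact hpos
  have hpt : P {ω : ℕ → 𝒳 | (T : ℕ∞) ≤ τ ω} ≠ ⊤ := measure_ne_top _ _
  -- the conditioning event in the product space
  have hEmeas : MeasurableSet {q : (ℕ → 𝒳) × Ωr | (T : ℕ∞) ≤ τ q.1} :=
    measurable_fst hEτmeas
  have hPME : (P.prod μr) {q : (ℕ → 𝒳) × Ωr | (T : ℕ∞) ≤ τ q.1}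
      = P {ω : ℕ → 𝒳 | (T : ℕ∞) ≤ τ ω} := by
    have hE : {q : (ℕ → 𝒳) × Ωr | (T : ℕ∞) ≤ τ q.1}
        = {ω : ℕ → 𝒳 | (T : ℕ∞) ≤ τ ω} ×ˢ (Set.univ : Set Ωr) := by
      ext q; simp
    rw [hE, Measure.prod_prod, measure_univ, mul_one]
  have hPME0 : (P.prod μr) {q : (ℕ → 𝒳) × Ωr | (T : ℕ∞) ≤ τ q.1} ≠ 0 := by
    rw [hPME]; exact hp0
  have hPMEt : (P.prod μr) {q : (ℕ → 𝒳) × Ωr | (T : ℕ∞) ≤ τ q.1} ≠ ⊤ := measure_ne_top _ _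
  -- step 1 : coverage of the changepoint confidence set
  have hcov := hCcov θ₀ hθ₀ θ₁ hθ₁ T hT P Pinf₀ hP hPinf₀ hpos
  rw [ProbabilityTheory.cond_apply hEmeas] at hcov
  have hTCE : {q : (ℕ → 𝒳) × Ωr | T ∈ C q} ⊆ {q : (ℕ → 𝒳) × Ωr | (T : ℕ∞) ≤ τ q.1} :=
    fun q hq => (hCsub q T hq).2
  rw [Set.inter_eq_right.mpr hTCE, hPME] at hcov
  have step1 : ENNReal.ofReal (1 - α) * P {ω : ℕ → 𝒳 | (T : ℕ∞) ≤ τ ω}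
      ≤ (P.prod μr) {q : (ℕ → 𝒳) × Ωr | T ∈ C q} := by
    rw [← ENNReal.div_eq_inv_mul] at hcov
    exact (ENNReal.le_div_iff_mul_le (Or.inl hp0) (Or.inl hpt)).mp hcov
  -- the CI event at time T
  have hBmeas : MeasurableSet {q : (ℕ → 𝒳) × Ωr | θ₀ ∈ CIset (η₀ * r T q.2) T q.1} := by
    have hm : Measurable fun q : (ℕ → 𝒳) × Ωr => (q.1, η₀ * r T q.2) :=
      measurable_fst.prodMk (measurable_const.mul ((hrmeas T).comp measurable_snd))
    exact hm (hCImeas T θ₀)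
  -- pointwise (in the auxiliary randomness) bound for the CI failure probability
  have hslice : ∀ᵐ a ∂μr,
      P {ω : ℕ → 𝒳 | (ω, a) ∈ {q : (ℕ → 𝒳) × Ωr | θ₀ ∈ CIset (η₀ * r T q.2) T q.1}ᶜ}
        ≤ ENNReal.ofReal (η₀ * r T a) := by
    filter_upwards [hrpos T] with a ha
    have hcpos : 0 < η₀ * r T a := mul_pos hη₀.1 ha
    have hmB : MeasurableSet {ω : ℕ → 𝒳 | θ₀ ∈ CIset (η₀ * r T a) T ω} := by
      have hm : Measurable fun ω : ℕ → 𝒳 => (ω, η₀ * r T a) :=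
        measurable_id.prodMk measurable_const
      exact hm (hCImeas T θ₀)
    have hsl : {ω : ℕ → 𝒳 | (ω, a) ∈ {q : (ℕ → 𝒳) × Ωr | θ₀ ∈ CIset (η₀ * r T q.2) T q.1}ᶜ}
        = {ω : ℕ → 𝒳 | θ₀ ∈ CIset (η₀ * r T a) T ω}ᶜ := rfl
    rw [hsl]
    rcases lt_or_ge (η₀ * r T a) 1 with hlt | hge
    · have hCI' := hCI (η₀ * r T a) ⟨hcpos, hlt⟩ T hT θ₀ hθ₀ θ₁ hθ₁ P hP
      rw [prob_compl_eq_one_sub hmB]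
      calc (1 : ℝ≥0∞) - P {ω : ℕ → 𝒳 | θ₀ ∈ CIset (η₀ * r T a) T ω}
          ≤ 1 - ENNReal.ofReal (1 - η₀ * r T a) := tsub_le_tsub_left hCI' 1
        _ = ENNReal.ofReal (η₀ * r T a) := by
            rw [← ENNReal.ofReal_one, ← ENNReal.ofReal_sub _ (by linarith)]
            norm_num
    · calc P {ω : ℕ → 𝒳 | θ₀ ∈ CIset (η₀ * r T a) T ω}ᶜ ≤ 1 := prob_le_one
        _ = ENNReal.ofReal 1 := ENNReal.ofReal_one.symm
        _ ≤ ENNReal.ofReal (η₀ * r T a) := ENNReal.ofReal_le_ofReal hge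
  -- bound on the probability of CI failure in the product space
  have hBc : (P.prod μr) {q : (ℕ → 𝒳) × Ωr | θ₀ ∈ CIset (η₀ * r T q.2) T q.1}ᶜ
      = ∫⁻ a, P {ω : ℕ → 𝒳 |
          (ω, a) ∈ {q : (ℕ → 𝒳) × Ωr | θ₀ ∈ CIset (η₀ * r T q.2) T q.1}ᶜ} ∂μr := by
    conv_lhs => rw [← Measure.prod_swap (μ := μr) (ν := P)]
    rw [Measure.map_apply measurable_swap hBmeas.compl,
      Measure.prod_apply (measurable_swap hBmeas.compl)]
    rfl
  have hBbound : (P.prod μr) {q : (ℕ → 𝒳) × Ωr | θ₀ ∈ CIset (η₀ * r T q.2) T q.1}ᶜ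
      ≤ ENNReal.ofReal η₀ * P {ω : ℕ → 𝒳 | (T : ℕ∞) ≤ τ ω} := by
    rw [hBc]
    calc ∫⁻ a, P {ω : ℕ → 𝒳 |
          (ω, a) ∈ {q : (ℕ → 𝒳) × Ωr | θ₀ ∈ CIset (η₀ * r T q.2) T q.1}ᶜ} ∂μr
        ≤ ∫⁻ a, ENNReal.ofReal (η₀ * r T a) ∂μr := lintegral_mono_ae hslice
      _ = ENNReal.ofReal (∫ a, η₀ * r T a ∂μr) :=
          (ofReal_integral_eq_lintegral_ofReal ((hrint T).const_mul η₀)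
            ((hrpos T).mono fun a ha => mul_nonneg hη₀.1.le ha.le)).symm
      _ = ENNReal.ofReal (η₀ * (Pinfs {ω : ℕ → 𝒳 | (T : ℕ∞) ≤ τ ω}).toReal) := by
          rw [integral_const_mul, hrunb T]
      _ = ENNReal.ofReal η₀ * Pinfs {ω : ℕ → 𝒳 | (T : ℕ∞) ≤ τ ω} := by
          rw [ENNReal.ofReal_mul hη₀.1.le, ENNReal.ofReal_toReal (measure_ne_top _ _)]
      _ ≤ ENNReal.ofReal η₀ * P {ω : ℕ → 𝒳 | (T : ℕ∞) ≤ τ ω} := by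
          rw [hkey]
          exact mul_le_mul_right (hass1 θ₀ hθ₀ T Pinf₀ hPinf₀) _
  -- step 2 : union bound
  have hsub : {q : (ℕ → 𝒳) × Ωr | T ∈ C q}
      ∩ {q : (ℕ → 𝒳) × Ωr | θ₀ ∈ CIset (η₀ * r T q.2) T q.1}
      ⊆ {q : (ℕ → 𝒳) × Ωr | (T : ℕ∞) ≤ τ q.1}
        ∩ {q : (ℕ → 𝒳) × Ωr | θ₀ ∈ ⋃ t ∈ C q, CIset (η₀ * r t q.2) t q.1} := by
    rintro q ⟨hqT, hqB⟩
    refine ⟨(hCsub q T hqT).2, ?_⟩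
    simp only [Set.mem_setOf_eq, Set.mem_iUnion]
    exact ⟨T, hqT, hqB⟩
  have step2 : (P.prod μr) {q : (ℕ → 𝒳) × Ωr | T ∈ C q}
      ≤ (P.prod μr) ({q : (ℕ → 𝒳) × Ωr | (T : ℕ∞) ≤ τ q.1}
          ∩ {q : (ℕ → 𝒳) × Ωr | θ₀ ∈ ⋃ t ∈ C q, CIset (η₀ * r t q.2) t q.1})
        + ENNReal.ofReal η₀ * P {ω : ℕ → 𝒳 | (T : ℕ∞) ≤ τ ω} := by
    calc (P.prod μr) {q : (ℕ → 𝒳) × Ωr | T ∈ C q}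
        ≤ (P.prod μr) (({q : (ℕ → 𝒳) × Ωr | T ∈ C q}
            ∩ {q : (ℕ → 𝒳) × Ωr | θ₀ ∈ CIset (η₀ * r T q.2) T q.1})
          ∪ {q : (ℕ → 𝒳) × Ωr | θ₀ ∈ CIset (η₀ * r T q.2) T q.1}ᶜ) := by
          refine measure_mono fun q hq => ?_
          by_cases hb : q ∈ {q : (ℕ → 𝒳) × Ωr | θ₀ ∈ CIset (η₀ * r T q.2) T q.1}
          exacts [Or.inl ⟨hq, hb⟩, Or.inr hb]
      _ ≤ (P.prod μr) ({q : (ℕ → 𝒳) × Ωr | T ∈ C q}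
            ∩ {q : (ℕ → 𝒳) × Ωr | θ₀ ∈ CIset (η₀ * r T q.2) T q.1})
          + (P.prod μr) {q : (ℕ → 𝒳) × Ωr | θ₀ ∈ CIset (η₀ * r T q.2) T q.1}ᶜ :=
          measure_union_le _ _
      _ ≤ _ := add_le_add (measure_mono hsub) hBbound
  -- put things together
  have hXY : ENNReal.ofReal (1 - α)
      = ENNReal.ofReal (1 - α - η₀) + ENNReal.ofReal η₀ := by
    rw [← ENNReal.ofReal_add hX0.le hη₀.1.le]
    norm_num
  have hmain : ENNReal.ofReal (1 - α - η₀) * P {ω : ℕ → 𝒳 | (T : ℕ∞) ≤ τ ω}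
      ≤ (P.prod μr) ({q : (ℕ → 𝒳) × Ωr | (T : ℕ∞) ≤ τ q.1}
          ∩ {q : (ℕ → 𝒳) × Ωr | θ₀ ∈ ⋃ t ∈ C q, CIset (η₀ * r t q.2) t q.1}) := by
    have h1 : ENNReal.ofReal (1 - α - η₀) * P {ω : ℕ → 𝒳 | (T : ℕ∞) ≤ τ ω}
        + ENNReal.ofReal η₀ * P {ω : ℕ → 𝒳 | (T : ℕ∞) ≤ τ ω}
        ≤ (P.prod μr) ({q : (ℕ → 𝒳) × Ωr | (T : ℕ∞) ≤ τ q.1}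
            ∩ {q : (ℕ → 𝒳) × Ωr | θ₀ ∈ ⋃ t ∈ C q, CIset (η₀ * r t q.2) t q.1})
          + ENNReal.ofReal η₀ * P {ω : ℕ → 𝒳 | (T : ℕ∞) ≤ τ ω} := by
      calc ENNReal.ofReal (1 - α - η₀) * P {ω : ℕ → 𝒳 | (T : ℕ∞) ≤ τ ω}
          + ENNReal.ofReal η₀ * P {ω : ℕ → 𝒳 | (T : ℕ∞) ≤ τ ω}
          = ENNReal.ofReal (1 - α) * P {ω : ℕ → 𝒳 | (T : ℕ∞) ≤ τ ω} := by
            rw [hXY, add_mul]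
        _ ≤ (P.prod μr) {q : (ℕ → 𝒳) × Ωr | T ∈ C q} := step1
        _ ≤ _ := step2
    exact (ENNReal.add_le_add_iff_right
      (ENNReal.mul_ne_top ENNReal.ofReal_ne_top hpt)).mp h1
  rw [ProbabilityTheory.cond_apply hEmeas, ← ENNReal.div_eq_inv_mul]
  refine (ENNReal.le_div_iff_mul_le (Or.inl hPME0) (Or.inl hPMEt)).mpr ?_
  rw [hPME]
  exact hmain


end SeqChange
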